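/- With bridges b1,...,bk in order and R_i the set of vertices reachable from s in G \ b_i, the tail of b_i belongs to R_i and the head of b_i does not belong to R_i, for each i. -/

import Mathlib

variable {V : Type*}

/-- Reachability via directed edges of relation `E`. -/
def reaches (E : V → V → Prop) : V → V → Prop := Relation.ReflTransGen E

/-- The graph with the single edge `e` deleted. -/
def eraseEdge (E : V → V → Prop) (e : V × V) : V → V → Prop :=
  fun a b => E a b ∧ (a, b) ≠ e

/-- `e` is an `s`-`t` bridge: it is an edge and its removal destroys all `s`-`t` paths. -/
def IsBridge (E : V → V → Prop) (s t : V) (e : V × V) : Prop :=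
  E e.1 e.2 ∧ ¬ reaches (eraseEdge E e) s t

/-- A directed walk from `s` to `t` whose successive vertices after `s` are `p`. -/
def IsWalk (E : V → V → Prop) (s t : V) (p : List V) : Prop :=
  List.Chain E s p ∧ (s :: p).getLast (List.cons_ne_nil s p) = t

/-- The list of edges of the walk `s :: p`. -/
def edgesOf (s : V) (p : List V) : List (V × V) := (s :: p).zip p

/-- the tail of each bridge b_i lies in R_i and its head does not. -/
theorem stmt15 (E : V → V → Prop) (s t : V) (hst : reaches E s t)
    (B : List (V × V)) (hnd : B.Nodup)
    (hB : ∀ e : V × V, IsBridge E s t e ↔ e ∈ B)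
    (horder : ∀ p : List V, IsWalk E s t p → B.Sublist (edgesOf s p)) :
    ∀ i : ℕ, (hi : i < B.length) →
      reaches (eraseEdge E (B.get ⟨i, hi⟩)) s (B.get ⟨i, hi⟩).1 ∧
        ¬ reaches (eraseEdge E (B.get ⟨i, hi⟩)) s (B.get ⟨i, hi⟩).2 := by
  intro i hi
  set b := B.get ⟨i, hi⟩ with hbdef
  have hmem : b ∈ B := B.get_mem ⟨i, hi⟩
  obtain ⟨hE, hnr⟩ : IsBridge E s t b := (hB b).mpr hmem
  constructor
  · have key : ∀ x, reaches E s x →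
        reaches (eraseEdge E b) s x ∨ reaches (eraseEdge E b) s b.1 := by
      intro x hx
      induction hx with
      | refl => exact Or.inl Relation.ReflTransGen.refl
      | @tail u v h1 h2 ih =>
        rcases ih with h | h
        · by_cases hc : (u, v) = b
          · have : u = b.1 := congrArg Prod.fst hc
            exact Or.inr (this ▸ h)
          · exact Or.inl (h.tail ⟨h2, hc⟩)
        · exact Or.inr h
    rcases key t hst with h | h
    · exact absurd h hnr
    · exact h
  · intro h2
    apply hnr
    have key : ∀ x, reaches E s x → reaches (eraseEdge E b) s x := by
      intro x hx
      induction hx with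
      | refl => exact Relation.ReflTransGen.refl
      | @tail u v h1 h2' ih =>
        by_cases hc : (u, v) = b
        · have : v = b.2 := congrArg Prod.snd hc
          exact this ▸ h2
        · exact ih.tail ⟨h2', hc⟩
    exact key t hst
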